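/- Let p be an odd prime and let Γ_p : ℤ_p → ℤ_p be Morita's p-adic gamma function, i.e. the unique continuous function satisfying Γ_p(n) = (−1)^n · ∏_{1 ≤ k < n, p ∤ k} k for every positive integer n. Then for every z ∈ ℤ_p with |z − 1| ≤ 1/p, there exists a continuous function g : ℤ_p → ℚ_p such that g(k) = z^k / Γ_p(k+1) for every nonnegative integer k. (Note that |Γ_p(s)| = 1 for all s ∈ ℤ_p, so the quotient is well defined.) -/

import Mathlib

open Filter Finset

lemma norm_gamma_eq_one (p : ℕ) [Fact p.Prime]
    (Γ : ℤ_[p] → ℤ_[p]) (hΓcont : Continuous Γ)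
    (hΓ : ∀ n : ℕ, 0 < n → Γ (n : ℤ_[p]) =
      (-1) ^ n * ∏ k ∈ (Finset.Ico 1 n).filter (fun k => ¬ p ∣ k), (k : ℤ_[p])) :
    ∀ s : ℤ_[p], ‖Γ s‖ = 1 := by
  have hpos : ∀ n : ℕ, 0 < n → ‖Γ (n : ℤ_[p])‖ = 1 := by
    intro n hn
    rw [hΓ n hn]
    have h1 : IsUnit ((-1 : ℤ_[p]) ^ n) := (IsUnit.neg isUnit_one).pow n
    have h2 : IsUnit (∏ k ∈ (Finset.Ico 1 n).filter (fun k => ¬ p ∣ k), (k : ℤ_[p])) := by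
      refine Finset.prod_induction _ IsUnit (fun a b ha hb => ha.mul hb) isUnit_one ?_
      intro k hk
      simp only [Finset.mem_filter] at hk
      rw [PadicInt.isUnit_iff]
      refine le_antisymm (PadicInt.norm_le_one _) ?_
      by_contra h
      push_neg at h
      have : ‖((k : ℤ) : ℤ_[p])‖ < 1 := by exact_mod_cast h
      rw [PadicInt.norm_int_lt_one_iff_dvd] at this
      exact hk.2 (by exact_mod_cast this)
    exact PadicInt.isUnit_iff.mp (h1.mul h2)
  -- the set where ‖Γ s‖ = 1 is closed and contains the dense set of positive integers
  have hdense : DenseRange (fun n : ℕ => ((n : ℤ_[p]) + 1)) := by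
    have h := PadicInt.denseRange_natCast (p := p)
    exact
      ((Homeomorph.addRight (1 : ℤ_[p])).surjective.denseRange.comp h
        (Homeomorph.addRight (1 : ℤ_[p])).continuous)
  intro s
  have hclosed : IsClosed {s : ℤ_[p] | ‖Γ s‖ = 1} :=
    isClosed_eq (continuous_norm.comp hΓcont) continuous_const
  have hsub : Set.range (fun n : ℕ => ((n : ℤ_[p]) + 1)) ⊆ {s : ℤ_[p] | ‖Γ s‖ = 1} := by
    rintro _ ⟨n, rfl⟩
    show ‖Γ ((n : ℤ_[p]) + 1)‖ = 1
    have h1 : ((n : ℤ_[p]) + 1) = ((n + 1 : ℕ) : ℤ_[p]) := by push_cast; ring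
    rw [h1]
    exact hpos (n + 1) n.succ_pos
  have : closure (Set.range (fun n : ℕ => ((n : ℤ_[p]) + 1))) ⊆ {s : ℤ_[p] | ‖Γ s‖ = 1} :=
    hclosed.closure_subset_iff.mpr hsub
  exact this (by rw [hdense.closure_range]; trivial)

instance padicInt_isBoundedSMul_padic (p : ℕ) [Fact p.Prime] : IsBoundedSMul ℤ_[p] ℚ_[p] :=
  IsBoundedSMul.of_norm_smul_le (fun r x => by
    rw [Algebra.smul_def, norm_mul]; rfl)

/-- Let `p` be an odd prime and `Γ` Morita's `p`-adic gamma function,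
i.e. the (unique) continuous function on `ℤ_[p]` with
`Γ n = (-1)^n * ∏_{1 ≤ k < n, p ∤ k} k` for positive integers `n`.  Then for every
`z ∈ ℤ_[p]` with `|z - 1| ≤ 1/p`, the sequence `k ↦ z^k / Γ(k+1)` extends to a
continuous function `ℤ_[p] → ℚ_[p]`. -/
theorem morita_gamma_sequence_extends (p : ℕ) [Fact p.Prime] (hp : p ≠ 2)
    (Γ : ℤ_[p] → ℤ_[p]) (hΓcont : Continuous Γ)
    (hΓ : ∀ n : ℕ, 0 < n → Γ (n : ℤ_[p]) =
      (-1) ^ n * ∏ k ∈ (Finset.Ico 1 n).filter (fun k => ¬ p ∣ k), (k : ℤ_[p]))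
    (z : ℤ_[p]) (hz : ‖z - 1‖ ≤ 1 / p) :
    ∃ g : ℤ_[p] → ℚ_[p], Continuous g ∧
      ∀ k : ℕ, g (k : ℤ_[p]) = ((z : ℚ_[p]) ^ k) / ((Γ ((k : ℤ_[p]) + 1) : ℚ_[p])) := by
  -- the coefficient sequence of the binomial (Mahler) series for `z^x`
  set c : ℚ_[p] := ((z - 1 : ℤ_[p]) : ℚ_[p]) with hc
  have hnormc : ‖c‖ < 1 := by
    have h2 : (2 : ℝ) ≤ p := by exact_mod_cast (Fact.out : p.Prime).two_le
    have : ‖c‖ = ‖z - 1‖ := PadicInt.norm_def.symm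
    rw [this]
    calc ‖z - 1‖ ≤ 1 / p := hz
      _ < 1 := by
        rw [div_lt_one (by linarith)]
        linarith
  have hcoef : Tendsto (fun n : ℕ => c ^ n) atTop (nhds 0) :=
    tendsto_pow_atTop_nhds_zero_of_norm_lt_one hnormc
  set f : C(ℤ_[p], ℚ_[p]) := PadicInt.mahlerSeries (fun n => c ^ n) with hf
  have hfval : ∀ m : ℕ, f (m : ℤ_[p]) = ((z : ℚ_[p])) ^ m := by
    intro m
    rw [hf, PadicInt.mahlerSeries_apply_nat hcoef (le_refl m)]
    have : ((z : ℚ_[p])) = c + 1 := by rw [hc]; push_cast; ring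
    rw [this, add_pow]
    simp only [one_pow, mul_one, nsmul_eq_mul]
    exact (Finset.sum_congr rfl fun i hi => by ring).symm
  have hΓnorm := norm_gamma_eq_one p Γ hΓcont hΓ
  have hΓne : ∀ x : ℤ_[p], ((Γ (x + 1) : ℤ_[p]) : ℚ_[p]) ≠ 0 := by
    intro x
    intro h
    have : ‖Γ (x + 1)‖ = 0 := by rw [PadicInt.norm_def, h, norm_zero]
    rw [hΓnorm (x + 1)] at this
    norm_num at this
  refine ⟨fun x => f x / ((Γ (x + 1) : ℤ_[p]) : ℚ_[p]), ?_, ?_⟩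
  · apply Continuous.div f.continuous
    · exact continuous_subtype_val.comp (hΓcont.comp (continuous_id.add continuous_const))
    · exact hΓne
  · intro k
    dsimp only
    rw [hfval k]
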